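/- Let A, B, C, D be real numbers with A > 0, D > 0 and BC < AD. Then there exists K > 0 such that the quadratic form Q(U, V) = A U^2 + (B + K C) U V + K D V^2 is positive definite on ℝ^2, i.e., Q(U,V) > 0 for all (U,V) ≠ (0,0). -/

import Mathlib

lemma aux8 (A B C D K : ℝ) (hA : 0 < A) (hK : 0 < K) (hD : 0 < D)
    (hdisc : (B + K * C) ^ 2 < 4 * A * (K * D)) :
    ∀ U V : ℝ, (U, V) ≠ (0, 0) →
      0 < A * U ^ 2 + (B + K * C) * U * V + K * D * V ^ 2 := by
  intro U V hUV
  by_cases hV : V = 0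
  · have hU : U ≠ 0 := by
      intro h; exact hUV (by simp [h, hV])
    subst hV
    have : 0 < U ^ 2 := by positivity
    nlinarith
  · have : 0 < V ^ 2 := by positivity
    nlinarith [sq_nonneg (2 * A * U + (B + K * C) * V)]

/-- If A > 0, D > 0 and BC < AD, there exists K > 0 making the quadratic form
Q(U,V) = A U² + (B + K C) U V + K D V² positive definite. -/
theorem stmt8 (A B C D : ℝ) (hA : 0 < A) (hD : 0 < D) (hBC : B * C < A * D) :
    ∃ K : ℝ, 0 < K ∧ ∀ U V : ℝ, (U, V) ≠ (0, 0) →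
      0 < A * U ^ 2 + (B + K * C) * U * V + K * D * V ^ 2 := by
  by_cases hC : C = 0
  · refine ⟨(B ^ 2 + 1) / (4 * A * D), by positivity, aux8 A B C D _ hA (by positivity) hD ?_⟩
    subst hC
    have h4AD : (0:ℝ) < 4 * A * D := by positivity
    have heq : 4 * A * ((B ^ 2 + 1) / (4 * A * D) * D) = B ^ 2 + 1 := by
      field_simp
    rw [mul_zero, add_zero, heq]
    nlinarith
  · have hC2 : 0 < C ^ 2 := by positivity
    set K := (4 * A * D - 2 * B * C) / (2 * C ^ 2) with hKdef
    have hnum : 0 < 4 * A * D - 2 * B * C := by nlinarith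
    have hK : 0 < K := by positivity
    refine ⟨K, hK, aux8 A B C D K hA hK hD ?_⟩
    have hKC : K * (2 * C ^ 2) = 4 * A * D - 2 * B * C := by
      rw [hKdef, div_mul_cancel₀ _ (by positivity)]
    nlinarith [mul_pos hA hD, mul_pos (mul_pos hA hD) (sub_pos.mpr hBC), sq_nonneg C, hK, mul_pos hK hC2]
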